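/- In the ℤ₂ lattice setting, assume hypotheses (a) and (c). Let 𝟙 ∈ ℋ be the constant function 1 (the state |+⟩^{⊗L}) and define ψ_p = ( ∏_{p∈P} (id + Z_p) ) 𝟙. Then ψ_p ≠ 0, and ψ_p is a simultaneous eigenvector: Z_p ψ_p = ψ_p for every p ∈ P and X_v ψ_p = ψ_p for every v ∈ V. -/

import Mathlib

/-!
STATEMENT 15: In the ℤ₂ lattice setting with hypotheses (a) and (c), the state
ψ_p = (∏_{p∈P} (id + Z_p)) 𝟙 is nonzero and satisfies Z_p ψ_p = ψ_p for all p and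
X_v ψ_p = ψ_p for all v.
-/

noncomputable section

variable {L : Type*} [Fintype L]

/-- The Hilbert space of the ℤ₂ lattice model. -/
abbrev HSp (L : Type*) : Type _ := (L → ZMod 2) → ℂ

/-- The diagonal (plaquette-type) operator `(Z_a f)(x) = (−1)^{∑ a(l)·x(l)} f(x)`. -/
def Zop (a : L → ZMod 2) : HSp L →ₗ[ℂ] HSp L where
  toFun f := fun x => (-1 : ℂ) ^ (∑ l, a l * x l : ZMod 2).val * f x
  map_add' _f _g := by funext x; simp [mul_add]
  map_smul' _c _f := by funext x; simp [smul_eq_mul]; ring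

/-- The shift (vertex-type) operator `(X_a f)(x) = f(x + a)`. -/
def Xop (a : L → ZMod 2) : HSp L →ₗ[ℂ] HSp L where
  toFun f := fun x => f (x + a)
  map_add' _f _g := rfl
  map_smul' _c _f := rfl

lemma Zop_comm (a b : L → ZMod 2) :
    Commute ((1 : Module.End ℂ (HSp L)) + Zop a) (1 + Zop b) := by
  have h : Commute (Zop a : Module.End ℂ (HSp L)) (Zop b) := by
    apply LinearMap.ext; intro f; funext x
    show (-1 : ℂ) ^ (∑ l, a l * x l : ZMod 2).val *
        ((-1 : ℂ) ^ (∑ l, b l * x l : ZMod 2).val * f x) = _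
    show _ = (-1 : ℂ) ^ (∑ l, b l * x l : ZMod 2).val *
        ((-1 : ℂ) ^ (∑ l, a l * x l : ZMod 2).val * f x)
    ring
  exact (Commute.one_left _).add_left ((Commute.one_right _).add_right h)

lemma key_prod {L P : Type*} [Fintype L] (bd : P → (L → ZMod 2))
    (S : Finset P) (f : HSp L) :
    (S.noncommProd (fun p : P => (1 : Module.End ℂ (HSp L)) + Zop (bd p))
      (fun p _ q _ _ => Zop_comm (bd p) (bd q))) f =
    fun x => (∏ p ∈ S, (1 + (-1 : ℂ) ^ (∑ l, bd p l * x l : ZMod 2).val)) * f x := by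
  classical
  induction S using Finset.induction_on with
  | empty => simp [Finset.noncommProd_empty]; rfl
  | @insert a S ha ih =>
      erw [Finset.noncommProd_insert_of_notMem _ _ _ _ ha]
      funext x
      have : ((1 : Module.End ℂ (HSp L)) + Zop (bd a))
          ((S.noncommProd (fun p : P => (1 : Module.End ℂ (HSp L)) + Zop (bd p))
            (fun p _ q _ _ => Zop_comm (bd p) (bd q))) f) x =
          (1 + (-1 : ℂ) ^ (∑ l, bd a l * x l : ZMod 2).val) *
          ((S.noncommProd (fun p : P => (1 : Module.End ℂ (HSp L)) + Zop (bd p))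
            (fun p _ q _ _ => Zop_comm (bd p) (bd q))) f) x := by
        simp [Zop, add_mul]
      rw [Module.End.mul_apply]
      rw [this, ih, Finset.prod_insert ha]
      ring

theorem plaquette_ground_state
    {L P V : Type*} [Fintype L] [Fintype P] [Fintype V]
    (bd : P → (L → ZMod 2)) (dl : V → (L → ZMod 2))
    (ha : ∀ S : Finset P, (∑ p ∈ S, bd p) = 0 ↔ S = ∅ ∨ S = Finset.univ)
    (hc : ∀ (p : P) (v : V), (∑ l, bd p l * dl v l) = (0 : ZMod 2)) :
    (Finset.univ.noncommProd (fun p : P => (1 : Module.End ℂ (HSp L)) + Zop (bd p))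
        (fun p _ q _ _ => Zop_comm (bd p) (bd q))) (fun _ => (1 : ℂ)) ≠ 0 ∧
    (∀ p : P,
      Zop (bd p) ((Finset.univ.noncommProd
          (fun p : P => (1 : Module.End ℂ (HSp L)) + Zop (bd p))
          (fun p _ q _ _ => Zop_comm (bd p) (bd q))) (fun _ => (1 : ℂ))) =
        (Finset.univ.noncommProd (fun p : P => (1 : Module.End ℂ (HSp L)) + Zop (bd p))
          (fun p _ q _ _ => Zop_comm (bd p) (bd q))) (fun _ => (1 : ℂ))) ∧
    (∀ v : V,
      Xop (dl v) ((Finset.univ.noncommProd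
          (fun p : P => (1 : Module.End ℂ (HSp L)) + Zop (bd p))
          (fun p _ q _ _ => Zop_comm (bd p) (bd q))) (fun _ => (1 : ℂ))) =
        (Finset.univ.noncommProd (fun p : P => (1 : Module.End ℂ (HSp L)) + Zop (bd p))
          (fun p _ q _ _ => Zop_comm (bd p) (bd q))) (fun _ => (1 : ℂ))) := by
  rw [key_prod]
  refine ⟨?_, ?_, ?_⟩
  · intro h
    have h0 := congrFun h 0
    simp at h0
  · intro p
    funext x
    show (-1 : ℂ) ^ (∑ l, bd p l * x l : ZMod 2).val *
      ((∏ q : P, (1 + (-1 : ℂ) ^ (∑ l, bd q l * x l : ZMod 2).val)) * 1) = _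
    by_cases hz : (∑ l, bd p l * x l : ZMod 2) = 0
    · rw [hz]; simp
    · have h1 : (∑ l, bd p l * x l : ZMod 2) = 1 := by
        have h : ∀ s : ZMod 2, s ≠ 0 → s = 1 := by decide
        exact h _ hz
      have hzero : (∏ q : P, (1 + (-1 : ℂ) ^ (∑ l, bd q l * x l : ZMod 2).val)) = 0 :=
        Finset.prod_eq_zero (Finset.mem_univ p) (by rw [h1]; simp [ZMod.val_one])
      rw [hzero]; ring
  · intro v
    funext x
    show (∏ q : P, (1 + (-1 : ℂ) ^ (∑ l, bd q l * (x + dl v) l : ZMod 2).val)) * 1 = _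
    congr 1
    refine Finset.prod_congr rfl fun q _ => ?_
    congr 2
    simp only [Pi.add_apply, mul_add, Finset.sum_add_distrib]
    rw [hc q v, add_zero]

end
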